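/- The determinant of the Jacobian of the SAIQH system at the disease-free equilibrium equals (𝒟 - 𝒩)μ, where 𝒩 and 𝒟 are the numerator and denominator of R₀ = 𝒩/𝒟; in particular, it is strictly positive if R₀ < 1 and strictly negative if R₀ > 1 (given 𝒟, μ > 0). -/

import Mathlib

set_option maxRecDepth 8000
set_option maxHeartbeats 1600000

lemma det_aux (a₀ a₁ a₂ a₃ a₄ a₅ a₆ a₇ ηk δ₁ δ₂ f₁ f₂ lH X Y Z b : ℝ) :
    (!![-a₅, b, b, lH * b, Y, 0;
        0, -(a₀ + b), -b, -(lH * b), 0, 0;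
        0, X, -a₁, 0, 0, 0;
        0, 0, a₆, -a₃, 0, ηk;
        Z, 0, δ₁ * f₁, a₄, -a₂, 0;
        0, 0, 0, δ₂ * f₂, 0, -a₇] : Matrix (Fin 6) (Fin 6) ℝ).det =
      ηk * δ₂ * f₂ * X * Y * Z * b - a₆ * a₇ * lH * X * Y * Z * b
        - a₃ * a₇ * X * Y * Z * b - a₂ * a₅ * ηk * δ₂ * f₂ * X * b
        + a₂ * a₅ * a₆ * a₇ * lH * X * b + a₂ * a₃ * a₅ * a₇ * X * b
        + a₁ * ηk * δ₂ * f₂ * Y * Z * b - a₁ * a₃ * a₇ * Y * Z * b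
        - a₁ * a₂ * a₅ * ηk * δ₂ * f₂ * b + a₁ * a₂ * a₃ * a₅ * a₇ * b
        + a₀ * a₁ * ηk * δ₂ * f₂ * Y * Z - a₀ * a₁ * a₃ * a₇ * Y * Z
        - a₀ * a₁ * a₂ * a₅ * ηk * δ₂ * f₂ + a₀ * a₁ * a₂ * a₃ * a₅ * a₇ := by
  simp (config := { decide := true, maxSteps := 10000000 }) [Matrix.det_succ_row_zero, Fin.sum_univ_succ, Fin.succAbove]
  ring

theorem jacobian_det_sign
    (β φ υ δ₁ δ₂ η ω α₁ α₂ μ q p f₁ f₂ f₃ κ m lH : ℝ)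
    (hβ : 0 < β) (hφ : 0 < φ) (hυ : 0 < υ) (hδ₁ : 0 < δ₁) (hδ₂ : 0 < δ₂)
    (hη : 0 < η) (hω : 0 < ω) (hα₁ : 0 < α₁) (hα₂ : 0 < α₂) (hμ : 0 < μ)
    (hq : 0 < q) (hp : 0 ≤ p ∧ p ≤ 1)
    (a₀ a₁ a₂ a₃ a₄ a₅ a₆ a₇ ηk χ 𝒩 𝒟 : ℝ)
    (ha₀ : a₀ = q * υ + μ) (ha₁ : a₁ = δ₁ + μ) (ha₂ : a₂ = m * ω + μ)
    (ha₃ : a₃ = δ₂ * (1 - f₂ - f₃) + δ₂ * f₂ + α₁ * f₃ + μ)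
    (ha₄ : a₄ = δ₂ * (1 - f₂ - f₃)) (ha₅ : a₅ = p * φ + μ)
    (ha₆ : a₆ = δ₁ * (1 - f₁)) (ha₇ : a₇ = η * (1 - κ) + α₂ * κ + μ)
    (hηk : ηk = η * (1 - κ)) (hχ : χ = a₃ * a₇ - δ₂ * ηk * f₂)
    (h𝒩 : 𝒩 = β * a₂ * (1 - p)
        * ((lH * a₆ * q * υ + (a₁ + q * υ) * a₃) * a₇
            - δ₂ * ηk * f₂ * (q * υ + a₁)))
    (h𝒟 : 𝒟 = a₀ * a₁ * χ * (p * φ + a₂)) (h𝒟pos : 0 < 𝒟)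
    (M : Matrix (Fin 6) (Fin 6) ℝ)
    (hM : M = !![-a₅, a₂ * β * (p - 1) / (φ * p + a₂), a₂ * β * (p - 1) / (φ * p + a₂),
          lH * a₂ * β * (p - 1) / (φ * p + a₂), m * ω, 0;
        0, -((a₀ * p * φ + a₂ * (β * p + a₀ - β)) / (φ * p + a₂)),
          -(a₂ * β * (p - 1) / (φ * p + a₂)),
          -(lH * a₂ * β * (p - 1) / (φ * p + a₂)), 0, 0;
        0, q * υ, -a₁, 0, 0, 0;
        0, 0, a₆, -a₃, 0, ηk;
        φ * p, 0, δ₁ * f₁, a₄, -a₂, 0;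
        0, 0, 0, δ₂ * f₂, 0, -a₇]) :
    M.det = (𝒟 - 𝒩) * μ ∧
    (𝒩 / 𝒟 < 1 → 0 < M.det) ∧
    (1 < 𝒩 / 𝒟 → M.det < 0) := by
  have hden : φ * p + a₂ ≠ 0 := by
    intro h
    rw [h𝒟] at h𝒟pos
    have : p * φ + a₂ = 0 := by linarith [h]
    rw [this, mul_zero] at h𝒟pos
    exact lt_irrefl 0 h𝒟pos
  have hdet : M.det = (𝒟 - 𝒩) * μ := by
    subst ha₀ ha₁ ha₂ ha₅ ha₆
    rw [h𝒟, h𝒩, hχ]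
    have hden2 : m * ω + μ + p * φ ≠ 0 := by intro h; exact hden (by linarith)
    have hM' : M = !![-(p * φ + μ), (m * ω + μ) * β * (p - 1) / (φ * p + (m * ω + μ)),
          (m * ω + μ) * β * (p - 1) / (φ * p + (m * ω + μ)),
          lH * ((m * ω + μ) * β * (p - 1) / (φ * p + (m * ω + μ))), m * ω, 0;
        0, -((q * υ + μ) + (m * ω + μ) * β * (p - 1) / (φ * p + (m * ω + μ))),
          -((m * ω + μ) * β * (p - 1) / (φ * p + (m * ω + μ))),
          -(lH * ((m * ω + μ) * β * (p - 1) / (φ * p + (m * ω + μ)))), 0, 0;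
        0, q * υ, -(δ₁ + μ), 0, 0, 0;
        0, 0, δ₁ * (1 - f₁), -a₃, 0, ηk;
        φ * p, 0, δ₁ * f₁, a₄, -(m * ω + μ), 0;
        0, 0, 0, δ₂ * f₂, 0, -a₇] := by
      rw [hM]
      ext i j
      fin_cases i <;> fin_cases j <;>
        simp only [Matrix.cons_val', Matrix.cons_val_zero, Matrix.cons_val_one,
          Matrix.head_cons, Matrix.empty_val', Matrix.cons_val_fin_one, Matrix.of_apply,
          Matrix.cons_val_succ, Matrix.head_fin_const, Fin.mk_zero, Fin.mk_one] <;>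
        (try rfl) <;> (try (rw [neg_inj, div_eq_iff hden, add_mul (q * υ + μ), div_mul_cancel₀ _ hden]; ring)) <;>
        (try (field_simp; ring)) <;> (try tauto) <;> (try ring)
    rw [hM', det_aux]
    field_simp
    ring
  refine ⟨hdet, ?_, ?_⟩
  · intro h
    rw [div_lt_one h𝒟pos] at h
    rw [hdet]
    exact mul_pos (by linarith) hμ
  · intro h
    rw [one_lt_div h𝒟pos] at h
    rw [hdet]
    have h1 : 𝒟 - 𝒩 < 0 := by linarith
    nlinarith
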